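/- arXiv:1006.4895 — 2 statements merged into one kernel-verified Lean document; each statement's English description precedes it below -/
import Mathlib

section
/- For a given polynomial p in n variables over the integers, consider the optimization problem: minimize u subject to (1 - u) * p(x_1,...,x_n) = 0, with u a non-negative integer and x a vector of non-negative integers. This problem is always feasible, and its optimal value is 0 if p(x_1,...,x_n) = 0 has a solution over the non-negative integers, and 1 otherwise. -/
open Classical in
theorem jeroslow_construction (n : ℕ) (p : MvPolynomial (Fin n) ℤ) :
    (∃ u : ℕ, ∃ x : Fin n → ℕ,
      ((1 : ℤ) - (u : ℤ)) * MvPolynomial.eval (fun i => (x i : ℤ)) p = 0) ∧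
    IsLeast {u : ℕ | ∃ x : Fin n → ℕ,
        ((1 : ℤ) - (u : ℤ)) * MvPolynomial.eval (fun i => (x i : ℤ)) p = 0}
      (if ∃ x : Fin n → ℕ, MvPolynomial.eval (fun i => (x i : ℤ)) p = 0 then 0 else 1) := by
  constructor
  · exact ⟨1, fun _ => 0, by simp⟩
  · split_ifs with h
    · obtain ⟨x, hx⟩ := h
      exact ⟨⟨x, by simp [hx]⟩, fun u _ => Nat.zero_le u⟩
    · constructor
      · exact ⟨fun _ => 0, by simp⟩
      · intro u hu
        obtain ⟨x, hx⟩ := hu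
        by_contra hlt
        push_neg at hlt
        interval_cases u
        simp at hx
        exact h ⟨x, hx⟩
end

section
/- For the mixed-integer linear problem with feasible region S = {(1/2, 1)} ∪ {(x, 0) : x ∈ [0, 1]} and objective maximize z (the second coordinate), restricting x to the grid (1/m) Z yields: for even m the unique optimal solution is (1/2, 1), while for odd m the unique optimal solution over the grid attains objective value 0. Hence the sequence of grid optima has two distinct limit points and does not converge. -/
open Filter in
theorem grid_optima_two_limit_points :
    ∀ S : Set (ℝ × ℝ), S = {((1:ℝ)/2, (1:ℝ))} ∪ {p : ℝ × ℝ | p.2 = 0 ∧ p.1 ∈ Set.Icc (0:ℝ) 1} →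
    (∀ m : ℕ, 0 < m → Even m →
      ((1/2, 1) ∈ S ∧ (∃ j : ℤ, ((1:ℝ)/2) = (j : ℝ) / m) ∧
        ∀ p ∈ S, (∃ j : ℤ, p.1 = (j : ℝ) / m) → p ≠ ((1:ℝ)/2, 1) → p.2 < 1)) ∧
    (∀ m : ℕ, 0 < m → ¬ Even m →
      ∀ p ∈ S, (∃ j : ℤ, p.1 = (j : ℝ) / m) → p.2 = 0) ∧
    ¬ ∃ L : ℝ × ℝ, Tendsto
        (fun m : ℕ => if Even m then (((1:ℝ)/2, (1:ℝ)) : ℝ × ℝ) else ((0:ℝ), (0:ℝ)))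
        atTop (nhds L) := by
  intro S hS
  refine ⟨?_, ?_, ?_⟩
  · intro m hm hev
    obtain ⟨k, hk⟩ := hev
    have hk' : m = 2 * k := by omega
    have hkpos : 0 < k := by omega
    refine ⟨by rw [hS]; left; rfl, ⟨(k : ℤ), ?_⟩, ?_⟩
    · rw [hk']
      push_cast
      rw [div_eq_div_iff (by norm_num) (by positivity)]
      ring
    · intro p hp _ hne
      rw [hS] at hp
      rcases hp with hp | hp
      · exact absurd hp hne
      · rw [hp.1]; norm_num
  · intro m hm hodd p hp hgrid
    rw [hS] at hp
    rcases hp with hp | hp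
    · exfalso
      obtain ⟨j, hj⟩ := hgrid
      rw [hp] at hj
      simp only at hj
      have hm0 : (m : ℝ) ≠ 0 := by positivity
      have : (m : ℝ) = 2 * j := by
        field_simp at hj
        linarith
      have : (m : ℤ) = 2 * j := by exact_mod_cast this
      exact hodd (by rw [← Int.even_coe_nat]; exact ⟨j, by omega⟩)
    · exact hp.1
  · rintro ⟨L, hL⟩
    have h2 : Filter.Tendsto (fun n : ℕ => 2 * n) atTop atTop := by
      apply tendsto_atTop_atTop.mpr
      intro b; exact ⟨b, fun a ha => by omega⟩
    have h3 : Filter.Tendsto (fun n : ℕ => 2 * n + 1) atTop atTop := by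
      apply tendsto_atTop_atTop.mpr
      intro b; exact ⟨b, fun a ha => by omega⟩
    have hA : Filter.Tendsto (fun _ : ℕ => (((1:ℝ)/2, (1:ℝ)) : ℝ × ℝ)) atTop (nhds L) := by
      have h := hL.comp h2
      have heq : ((fun m : ℕ => if Even m then (((1:ℝ)/2, (1:ℝ)) : ℝ × ℝ) else ((0:ℝ), (0:ℝ))) ∘ fun n => 2 * n) = fun _ : ℕ => (((1:ℝ)/2, (1:ℝ)) : ℝ × ℝ) := by
        funext n; simp [Function.comp, if_pos (⟨n, two_mul n⟩ : Even (2*n))]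
      rwa [heq] at h
    have hB : Filter.Tendsto (fun _ : ℕ => (((0:ℝ), (0:ℝ)) : ℝ × ℝ)) atTop (nhds L) := by
      have h := hL.comp h3
      have heq : ((fun m : ℕ => if Even m then (((1:ℝ)/2, (1:ℝ)) : ℝ × ℝ) else ((0:ℝ), (0:ℝ))) ∘ fun n => 2 * n + 1) = fun _ : ℕ => (((0:ℝ), (0:ℝ)) : ℝ × ℝ) := by
        funext n
        have : ¬ Even (2 * n + 1) := by simp [Nat.even_add_one, parity_simps]
        simp [Function.comp, if_neg this]
      rwa [heq] at h
    have e1 : L = ((1:ℝ)/2, 1) := tendsto_nhds_unique hA tendsto_const_nhds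
    have e2 : L = ((0:ℝ), 0) := tendsto_nhds_unique hB tendsto_const_nhds
    rw [e1] at e2
    have : (1:ℝ)/2 = 0 := congrArg Prod.fst e2
    norm_num at this
end
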